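/- Perturbed supersolution lemma: let v be a Lipschitz viscosity supersolution of ∂_t V + 𝓗_{2R}(x,D_xV) + F̂ = 0 on [0,T)×Int(Ŝ_d), where 𝓗_{2R} is concave in z and satisfies ⟨D_z𝓗_{2R}(x,z), Dρ_i(x)⟩ ≥ −C_R ρ_i(x) for all i, x, z with C_R = 2R(d−1). For h ∈ (0, 1/(dC_R)], define v_h(t,x) := v(t,x) − h²∑_{i=1}^d ln(ρ_i(x)) + h(T−t). Then v_h is a viscosity supersolution of the same equation on [0,T)×Int(Ŝ_d). -/

import Mathlib

open Set

noncomputable section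

/-- The closed set `Ŝ_d = {x ∈ ℝ₊^{d−1} : ∑ x_i ≤ 1}` (local coordinates on the simplex);
here `n = d − 1`. -/
def shat (n : ℕ) : Set (Fin n → ℝ) := {x | (∀ i, 0 ≤ x i) ∧ ∑ i, x i ≤ 1}

/-- The interior `Int(Ŝ_d) = {x : ∀ i, x_i > 0, ∑ x_i < 1}`. -/
def shatInt (n : ℕ) : Set (Fin n → ℝ) := {x | (∀ i, 0 < x i) ∧ ∑ i, x i < 1}

/-- The spatial gradient `D_xψ(t,x)` of a test function, as a vector of partial
derivatives. -/
def spaceGrad (n : ℕ) (ψ : ℝ × (Fin n → ℝ) → ℝ) (t : ℝ) (x : Fin n → ℝ) :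
    Fin n → ℝ :=
  fun i => fderiv ℝ (fun y => ψ (t, y)) x (Pi.single i 1)

/-- Viscosity subsolution on `[0,T) × Int(Ŝ_d)` of
`∂_t V + H(x, D_xV) + F̂(x) = 0` (no boundary condition): at every local maximum point
`(t̄,x̄) ∈ [0,T) × Int(Ŝ_d)` of `u − ψ` (relative to `[0,T) × Int(Ŝ_d)`), for `ψ` a `C¹`
test function, `−∂_tψ(t̄,x̄) − H(x̄, D_xψ(t̄,x̄)) − F̂(x̄) ≤ 0`. -/
def IsViscSubsolution (n : ℕ) (T : ℝ)
    (H : (Fin n → ℝ) → (Fin n → ℝ) → ℝ) (Fh : (Fin n → ℝ) → ℝ)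
    (u : ℝ → (Fin n → ℝ) → ℝ) : Prop :=
  ∀ ψ : ℝ × (Fin n → ℝ) → ℝ, ContDiff ℝ 1 ψ →
    ∀ t : ℝ, ∀ x : Fin n → ℝ, t ∈ Set.Ico (0:ℝ) T → x ∈ shatInt n →
      IsLocalMaxOn (fun q : ℝ × (Fin n → ℝ) => u q.1 q.2 - ψ q)
        (Set.Ico (0:ℝ) T ×ˢ shatInt n) (t, x) →
      -(deriv (fun s => ψ (s, x)) t) - H x (spaceGrad n ψ t x) - Fh x ≤ 0

/-- Viscosity supersolution on `[0,T) × Int(Ŝ_d)` of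
`∂_t V + H(x, D_xV) + F̂(x) = 0` (no boundary condition). -/
def IsViscSupersolution (n : ℕ) (T : ℝ)
    (H : (Fin n → ℝ) → (Fin n → ℝ) → ℝ) (Fh : (Fin n → ℝ) → ℝ)
    (u : ℝ → (Fin n → ℝ) → ℝ) : Prop :=
  ∀ ψ : ℝ × (Fin n → ℝ) → ℝ, ContDiff ℝ 1 ψ →
    ∀ t : ℝ, ∀ x : Fin n → ℝ, t ∈ Set.Ico (0:ℝ) T → x ∈ shatInt n →
      IsLocalMinOn (fun q : ℝ × (Fin n → ℝ) => u q.1 q.2 - ψ q)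
        (Set.Ico (0:ℝ) T ×ˢ shatInt n) (t, x) →
      0 ≤ -(deriv (fun s => ψ (s, x)) t) - H x (spaceGrad n ψ t x) - Fh x

/-- `Ĥ^i(z) = −(1/2)(∑_{j≠i}((z_i−z_j)₊)² + (z_i)₊²)` for `i ≤ d−1`. -/
def hamHatI (n : ℕ) (i : Fin n) (z : Fin n → ℝ) : ℝ :=
  -(1 / 2) * ((∑ j ∈ Finset.univ.erase i, max (z i - z j) 0 ^ 2) + max (z i) 0 ^ 2)

/-- `Ĥ^d(z) = −(1/2)∑_j((−z_j)₊)²`. -/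
def hamHatD (n : ℕ) (z : Fin n → ℝ) : ℝ :=
  -(1 / 2) * ∑ j, max (-z j) 0 ^ 2

/-- `𝓗(x,z) = ∑_{i≤d−1} x_i Ĥ^i(z) + x^{−d} Ĥ^d(z)`. -/
def hamCal (n : ℕ) (x z : Fin n → ℝ) : ℝ :=
  (∑ i, x i * hamHatI n i z) + (1 - ∑ i, x i) * hamHatD n z

/-- perturbed supersolution lemma.  Let `v` be a Lipschitz viscosity
supersolution on `[0,T) × Int(Ŝ_d)` of `∂_tV + H(x,D_xV) + F̂ = 0`, where `H` (playing the
role of the truncated Hamiltonian `𝓗_{2R}`) is differentiable and concave in `z` and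
satisfies `⟨D_zH(x,z), Dρ_i(x)⟩ ≥ −C_R ρ_i(x)` for all `i ∈ {1,…,d}`, `x ∈ Int(Ŝ_d)`,
`z ∈ ℝ^{d−1}`, with `C_R = 2R(d−1)` and `ρ_i(x) = x_i` (`i ≤ d−1`),
`ρ_d(x) = (1−∑x)/√(d−1)`.  Then for every `h ∈ (0, 1/(d·C_R)]`, the perturbation
`v_h(t,x) = v(t,x) − h²∑_{i=1}^d ln(ρ_i(x)) + h(T−t)` is again a viscosity supersolution
of the same equation.  Here `n = d−1 ≥ 1`. -/
lemma concave_le_tangent {E : Type*} [NormedAddCommGroup E] [NormedSpace ℝ E]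
    {f : E → ℝ} (hc : ConcaveOn ℝ Set.univ f) (hd : Differentiable ℝ f) (a b : E) :
    f b ≤ f a + fderiv ℝ f a (b - a) := by
  rcases eq_or_ne b a with rfl | hba
  · simp
  · set g : ℝ → ℝ := fun θ => f (a + θ • (b - a)) with hg
    have hgc : ConcaveOn ℝ Set.univ g := by
      have := hc.comp_affineMap (AffineMap.lineMap a b)
      have hgeq : g = f ∘ (AffineMap.lineMap a b) := by
        funext θ
        simp [hg, AffineMap.lineMap_apply, add_comm]
      rw [hgeq, ← Set.preimage_univ (f := ⇑(AffineMap.lineMap a b))]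
      exact this
    have hγ : ∀ θ : ℝ, HasDerivAt (fun θ : ℝ => a + θ • (b - a)) (b - a) θ := by
      intro θ
      simpa using ((hasDerivAt_id θ).smul_const (b - a)).const_add a
    have hg' : HasDerivAt g (fderiv ℝ f a (b - a)) 0 := by
      have := (hd (a + (0:ℝ) • (b-a))).hasFDerivAt.comp_hasDerivAt 0 (hγ 0)
      simp only [zero_smul, add_zero] at this
      exact this
    have := hgc.slope_le_of_hasDerivAt (Set.mem_univ 0) (Set.mem_univ 1) one_pos hg'
    have hs : slope g 0 1 = f b - f a := by
      simp [slope, hg]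
    rw [hs] at this
    linarith

set_option maxHeartbeats 1000000 in
theorem perturbed_supersolution
    (n : ℕ) (hn : 1 ≤ n) (T R : ℝ) (hT : 0 < T) (hR : 0 < R)
    (H : (Fin n → ℝ) → (Fin n → ℝ) → ℝ) (Fh : (Fin n → ℝ) → ℝ)
    (hHdiff : ∀ x, Differentiable ℝ (H x))
    (hHconc : ∀ x ∈ shatInt n, ConcaveOn ℝ Set.univ (H x))
    (hHrho : ∀ x ∈ shatInt n, ∀ z : Fin n → ℝ, ∀ i : Fin n,
      -(2 * R * (n : ℝ)) * x i ≤ fderiv ℝ (H x) z (Pi.single i 1))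
    (hHrhoD : ∀ x ∈ shatInt n, ∀ z : Fin n → ℝ,
      -(2 * R * (n : ℝ)) * ((1 - ∑ l, x l) / Real.sqrt n)
        ≤ (∑ j, fderiv ℝ (H x) z (Pi.single j 1)) * (-(1 / Real.sqrt n)))
    (v : ℝ → (Fin n → ℝ) → ℝ) (K : NNReal)
    (hLip : LipschitzOnWith K (fun q : ℝ × (Fin n → ℝ) => v q.1 q.2)
      (Set.Ico (0:ℝ) T ×ˢ shatInt n))
    (hsuper : IsViscSupersolution n T H Fh v)
    (h : ℝ) (hh0 : 0 < h) (hh1 : h ≤ 1 / (((n : ℝ) + 1) * (2 * R * (n : ℝ)))) :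
    IsViscSupersolution n T H Fh
      (fun t x =>
        v t x
          - h ^ 2 * ((∑ i, Real.log (x i)) + Real.log ((1 - ∑ l, x l) / Real.sqrt n))
          + h * (T - t)) := by
  classical
  intro ψ hψ t x ht hx hmin
  have hxpos : ∀ i, 0 < x i := hx.1
  have hxsum : ∑ i, x i < 1 := hx.2
  haveI : Nonempty (Fin n) := ⟨⟨0, hn⟩⟩
  have hn1 : (1:ℝ) ≤ (n:ℝ) := by exact_mod_cast hn
  have hnpos : (0:ℝ) < n := by linarith
  have hsq : (0:ℝ) < Real.sqrt n := Real.sqrt_pos.mpr hnpos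
  set C : ℝ := 2 * R * (n : ℝ) with hCdef
  have hCpos : 0 < C := by rw [hCdef]; positivity
  set σ : ℝ := 1 - ∑ l, x l with hσdef
  have hσpos : 0 < σ := by rw [hσdef]; linarith
  -- the radius ε
  set m1 : ℝ := Finset.univ.inf' Finset.univ_nonempty x with hm1def
  have hm1 : 0 < m1 := by
    rw [hm1def, Finset.lt_inf'_iff]
    exact fun i _ => hxpos i
  have hm1le : ∀ i, m1 ≤ x i := fun i => Finset.inf'_le _ (Finset.mem_univ i)
  set ε : ℝ := min m1 (σ / n) / 2 with hεdef
  have hεpos : 0 < ε := by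
    rw [hεdef]
    have : 0 < σ / n := by positivity
    have := lt_min hm1 this
    linarith
  have hεm1 : ε ≤ m1 / 2 := by
    rw [hεdef]
    have := min_le_left m1 (σ / n)
    linarith
  have hεσ : (n:ℝ) * ε ≤ σ / 2 := by
    have h1 : ε ≤ σ / n / 2 := by
      rw [hεdef]
      have := min_le_right m1 (σ / n)
      linarith
    have h2 : (n:ℝ) * ε ≤ (n:ℝ) * (σ / n / 2) := by nlinarith
    have h3 : (n:ℝ) * (σ / n / 2) = σ / 2 := by
      field_simp
    linarith
  -- the localization function
  set Q : (Fin n → ℝ) → ℝ := fun y => ∑ i, (y i - x i)^2 with hQdef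
  have hQc : ContDiff ℝ 1 Q := by
    apply ContDiff.sum
    intro i _
    exact ((ContinuousLinearMap.proj (R := ℝ) (φ := fun _ : Fin n => ℝ)
      i).contDiff.sub contDiff_const).pow 2
  have hQcont : Continuous Q := hQc.continuous
  have hQx : Q x = 0 := by simp [hQdef]
  have habs : ∀ y, Q y ≤ ε^2 → ∀ i, |y i - x i| ≤ ε := by
    intro y hy i
    have h1 : (y i - x i)^2 ≤ Q y := by
      rw [hQdef]
      exact Finset.single_le_sum (f := fun i => (y i - x i)^2)
        (fun i _ => sq_nonneg _) (Finset.mem_univ i)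
    have h2 : (y i - x i)^2 ≤ ε^2 := h1.trans hy
    calc |y i - x i| = Real.sqrt ((y i - x i)^2) := (Real.sqrt_sq_eq_abs _).symm
      _ ≤ Real.sqrt (ε^2) := Real.sqrt_le_sqrt h2
      _ = ε := Real.sqrt_sq hεpos.le
  have hU : ∀ y, Q y ≤ ε^2 → y ∈ shatInt n := by
    intro y hy
    constructor
    · intro i
      have h1 := (abs_le.mp (habs y hy i)).1
      have := hm1le i
      linarith
    · have h1 : ∀ l, y l ≤ x l + ε := fun l => by
        have := (abs_le.mp (habs y hy l)).2; linarith
      have h2 : ∑ l, y l ≤ ∑ l, (x l + ε) := Finset.sum_le_sum fun l _ => h1 l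
      have h3 : ∑ l : Fin n, (x l + ε) = (∑ l, x l) + (n:ℝ) * ε := by
        rw [Finset.sum_add_distrib]
        simp [Finset.card_univ, mul_comm]
      have : ∑ l, x l = 1 - σ := by rw [hσdef]; ring
      rw [h3, this] at h2
      linarith
  -- cutoff
  set χ : (Fin n → ℝ) → ℝ := fun y => Real.smoothTransition (2 - 2 * Q y / ε^2) with hχdef
  have hχc : ContDiff ℝ 1 χ := by
    exact (Real.smoothTransition.contDiff.of_le (by exact_mod_cast le_top)).comp
      (contDiff_const.sub ((contDiff_const.mul hQc).div_const _))
  have hχ1 : ∀ y, Q y ≤ ε^2/2 → χ y = 1 := by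
    intro y hy
    apply Real.smoothTransition.one_of_one_le
    have : 2 * Q y / ε^2 ≤ 1 := by rw [div_le_one (by positivity)]; linarith
    linarith
  have hχ0 : ∀ y, ε^2 ≤ Q y → χ y = 0 := by
    intro y hy
    apply Real.smoothTransition.zero_of_nonpos
    have : 2 ≤ 2 * Q y / ε^2 := by rw [le_div_iff₀ (by positivity)]; linarith
    linarith
  -- log function
  set L : (Fin n → ℝ) → ℝ :=
    fun y => (∑ i, Real.log (y i)) + Real.log ((1 - ∑ l, y l) / Real.sqrt n) with hLdef
  have hsumc : ContDiff ℝ 1 (fun y : Fin n → ℝ => ∑ l, y l) :=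
    ContDiff.sum fun j _ =>
      (ContinuousLinearMap.proj (R := ℝ) (φ := fun _ : Fin n => ℝ) j).contDiff
  have hLc : ∀ y, y ∈ shatInt n → ContDiffAt ℝ 1 L y := by
    intro y hy
    apply ContDiffAt.add
    · apply ContDiffAt.sum
      intro j _
      exact (Real.contDiffAt_log.mpr (ne_of_gt (hy.1 j))).comp y
        (ContinuousLinearMap.proj (R := ℝ) (φ := fun _ : Fin n => ℝ) j).contDiff.contDiffAt
    · have hne' : (1 - ∑ l, y l) / Real.sqrt n ≠ 0 := by
        have : 0 < 1 - ∑ l, y l := by have := hy.2; linarith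
        positivity
      exact (Real.contDiffAt_log.mpr hne').comp y
        ((contDiff_const.sub hsumc).div_const _).contDiffAt
  -- glued perturbation
  set g : (Fin n → ℝ) → ℝ := fun y => χ y * L y with hgdef
  have hgc : ContDiff ℝ 1 g := by
    rw [contDiff_iff_contDiffAt]
    intro y
    by_cases hy : Q y ≤ ε^2
    · exact hχc.contDiffAt.mul (hLc y (hU y hy))
    · have hopen : IsOpen {z | ε^2 < Q z} := isOpen_lt continuous_const hQcont
      have hev : g =ᶠ[nhds y] (fun _ => (0:ℝ)) := by
        filter_upwards [hopen.mem_nhds (not_le.mp hy)] with z hz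
        simp [hgdef, hχ0 z hz.le]
      exact (contDiffAt_const (c := (0:ℝ))).congr_of_eventuallyEq hev
  have hopen2 : IsOpen {z | Q z < ε^2/2} := isOpen_lt hQcont continuous_const
  have hx2 : x ∈ {z | Q z < ε^2/2} := by
    simp only [Set.mem_setOf_eq, hQx]
    positivity
  have hgL : g =ᶠ[nhds x] L := by
    filter_upwards [hopen2.mem_nhds hx2] with z hz
    simp [hgdef, hχ1 z hz.le]
  -- test function for v
  set φ : ℝ × (Fin n → ℝ) → ℝ :=
    fun q => ψ q + h^2 * g q.2 - h * (T - q.1) with hφdef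
  have hφc : ContDiff ℝ 1 φ := by
    apply ContDiff.sub
    · exact hψ.add (contDiff_const.mul (hgc.comp contDiff_snd))
    · exact contDiff_const.mul (contDiff_const.sub contDiff_fst)
  -- local min transfer
  have hmin2 : ∀ᶠ q : ℝ × (Fin n → ℝ) in nhdsWithin (t, x) (Set.Ico (0:ℝ) T ×ˢ shatInt n),
      (fun q : ℝ × (Fin n → ℝ) =>
        (v q.1 q.2 - h ^ 2 * ((∑ i, Real.log (q.2 i)) +
          Real.log ((1 - ∑ l, q.2 l) / Real.sqrt n)) + h * (T - q.1)) - ψ q) (t, x) ≤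
      (fun q : ℝ × (Fin n → ℝ) =>
        (v q.1 q.2 - h ^ 2 * ((∑ i, Real.log (q.2 i)) +
          Real.log ((1 - ∑ l, q.2 l) / Real.sqrt n)) + h * (T - q.1)) - ψ q) q := hmin
  have hmin' : IsLocalMinOn (fun q : ℝ × (Fin n → ℝ) => v q.1 q.2 - φ q)
      (Set.Ico (0:ℝ) T ×ˢ shatInt n) (t, x) := by
    show ∀ᶠ q in nhdsWithin (t, x) (Set.Ico (0:ℝ) T ×ˢ shatInt n), _ ≤ _
    have hW : ∀ᶠ q : ℝ × (Fin n → ℝ) in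
        nhdsWithin (t, x) (Set.Ico (0:ℝ) T ×ˢ shatInt n), Q q.2 < ε^2/2 := by
      apply mem_nhdsWithin_of_mem_nhds
      exact (hopen2.preimage continuous_snd).mem_nhds hx2
    filter_upwards [hmin2, hW] with q hq hq2
    have e1 : χ q.2 = 1 := hχ1 _ hq2.le
    have e2 : χ x = 1 := hχ1 _ hx2.out.le
    simp only [hφdef, hgdef, hLdef, e1, e2, one_mul] at *
    ring_nf
    ring_nf at hq
    linarith [hq]
  have key := hsuper φ hφc t x ht hx hmin'
  -- time derivative
  have hψt : DifferentiableAt ℝ (fun s => ψ (s, x)) t :=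
    ((hψ.differentiable one_ne_zero) (t, x)).comp t (DifferentiableAt.prodMk differentiableAt_id (differentiableAt_const x))
  have hdt : deriv (fun s => φ (s, x)) t = deriv (fun s => ψ (s, x)) t + h := by
    have hc : HasDerivAt (fun s : ℝ => h * (T - s)) (-h) t := by
      simpa using ((hasDerivAt_id t).const_sub T).const_mul h
    have hd2 : HasDerivAt (fun s => φ (s, x)) (deriv (fun s => ψ (s, x)) t - (-h)) t := by
      have hfun : (fun s => φ (s, x)) =
          fun s => (ψ (s, x) + h^2 * g x) - h * (T - s) := by
        funext s; simp [hφdef]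
      rw [hfun]
      exact (hψt.hasDerivAt.add_const (h^2 * g x)).sub hc
    rw [hd2.deriv]; ring
  -- space derivative
  have hgd : HasFDerivAt g (fderiv ℝ L x) x := by
    have hLd : DifferentiableAt ℝ L x := (hLc x hx).differentiableAt one_ne_zero
    exact hLd.hasFDerivAt.congr_of_eventuallyEq hgL
  have hψx : DifferentiableAt ℝ (fun y => ψ (t, y)) x :=
    ((hψ.differentiable one_ne_zero) (t, x)).comp x (DifferentiableAt.prodMk (differentiableAt_const t) differentiableAt_id)
  have hφy : HasFDerivAt (fun y => φ (t, y))
      (fderiv ℝ (fun y => ψ (t, y)) x + h^2 • fderiv ℝ L x) x := by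
    have hfun : (fun y => φ (t, y)) =
        fun y => (ψ (t, y) + h^2 * g y) - h * (T - t) := by
      funext y; simp [hφdef]
    rw [hfun]
    exact (hψx.hasFDerivAt.add (hgd.const_mul (h^2))).sub_const (h * (T - t))
  -- fderiv of L at x
  have hproj : ∀ j : Fin n, HasFDerivAt (fun y : Fin n → ℝ => y j)
      (ContinuousLinearMap.proj (R := ℝ) (φ := fun _ : Fin n => ℝ) j) x :=
    fun j => hasFDerivAt_apply j x
  have hlog1 : ∀ j : Fin n, HasFDerivAt (fun y : Fin n → ℝ => Real.log (y j))
      ((x j)⁻¹ • ContinuousLinearMap.proj (R := ℝ) (φ := fun _ : Fin n => ℝ) j) x :=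
    fun j => by
      have := (Real.hasDerivAt_log (ne_of_gt (hxpos j))).comp_hasFDerivAt x (hproj j)
      exact this
  have hsumd : HasFDerivAt (fun y : Fin n → ℝ => ∑ l, y l)
      (∑ j, ContinuousLinearMap.proj (R := ℝ) (φ := fun _ : Fin n => ℝ) j) x :=
    HasFDerivAt.fun_sum fun j _ => hproj j
  have hAd : HasFDerivAt (fun y : Fin n → ℝ => (1 - ∑ l, y l) / Real.sqrt n)
      ((Real.sqrt n)⁻¹ • (-(∑ j, ContinuousLinearMap.proj (R := ℝ) (φ := fun _ : Fin n => ℝ) j))) x := by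
    have := (hsumd.const_sub 1).mul_const (Real.sqrt n)⁻¹
    simpa [div_eq_mul_inv, smul_smul, mul_comm] using this
  have hAne : (1 - ∑ l, x l) / Real.sqrt n ≠ 0 := by
    rw [← hσdef]; positivity
  have hA2 := (Real.hasDerivAt_log hAne).comp_hasFDerivAt x hAd
  have hL' : HasFDerivAt L
      ((∑ j, (x j)⁻¹ • ContinuousLinearMap.proj (R := ℝ) (φ := fun _ : Fin n => ℝ) j)
        + ((1 - ∑ l, x l) / Real.sqrt n)⁻¹ • (Real.sqrt n)⁻¹ •
          (-(∑ j, ContinuousLinearMap.proj (R := ℝ) (φ := fun _ : Fin n => ℝ) j))) x :=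
    (HasFDerivAt.fun_sum (u := (Finset.univ : Finset (Fin n))) (fun j _ => hlog1 j)).add hA2
  have hval : ∀ i, spaceGrad n φ t x i
      = spaceGrad n ψ t x i + h^2 * ((x i)⁻¹ - σ⁻¹) := by
    intro i
    have hLL : HasFDerivAt L _ x := hL'
    have h1 : fderiv ℝ L x (Pi.single i 1) = (x i)⁻¹ - σ⁻¹ := by
      rw [hLL.fderiv]
      have hs : Real.sqrt n ≠ 0 := ne_of_gt hsq
      have hσ : σ ≠ 0 := ne_of_gt hσpos
      have hxi : x i ≠ 0 := ne_of_gt (hxpos i)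
      simp only [ContinuousLinearMap.add_apply, ContinuousLinearMap.coe_sum',
        Finset.sum_apply, ContinuousLinearMap.coe_smul', Pi.smul_apply,
        ContinuousLinearMap.proj_apply, ContinuousLinearMap.neg_apply,
        Pi.single_apply, smul_eq_mul, mul_ite, mul_one, mul_zero,
        Finset.sum_ite_eq', Finset.mem_univ, if_true]
      rw [← hσdef]
      field_simp
      try ring
    show fderiv ℝ (fun y => φ (t, y)) x (Pi.single i 1) = _
    rw [hφy.fderiv]
    simp only [ContinuousLinearMap.add_apply, ContinuousLinearMap.coe_smul',
      Pi.smul_apply, smul_eq_mul, h1]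
    rfl
  set p : Fin n → ℝ := spaceGrad n ψ t x with hpdef
  set zs : Fin n → ℝ := spaceGrad n φ t x with hzdef
  set D : Fin n → ℝ := fun i => fderiv ℝ (H x) zs (Pi.single i 1) with hDdef
  have htan : H x p ≤ H x zs + fderiv ℝ (H x) zs (p - zs) :=
    concave_le_tangent (hHconc x hx) (hHdiff x) zs p
  have hrepr : p - zs = ∑ i, (p i - zs i) • (Pi.single i 1 : Fin n → ℝ) := by
    funext j
    simp [Finset.sum_apply, Pi.single_apply, mul_ite]
  have hlin : fderiv ℝ (H x) zs (p - zs) = ∑ i, (p i - zs i) * D i := by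
    rw [hrepr, map_sum]
    simp [map_smul, smul_eq_mul, hDdef]
  have hSle : ∑ i, D i ≤ C * σ := by
    have h0 : -C * (σ / Real.sqrt n) ≤ (∑ j, D j) * (-(1 / Real.sqrt n)) := by
      have := hHrhoD x hx zs
      rw [hσdef, hDdef]
      exact this
    have h1 := mul_le_mul_of_nonneg_right h0 hsq.le
    have h2 : Real.sqrt n ≠ 0 := ne_of_gt hsq
    have h5 : ((∑ j, D j) * (-(1 / Real.sqrt n))) * Real.sqrt n = -(∑ j, D j) := by
      field_simp
      try ring
    have h6 : (-C * (σ / Real.sqrt n)) * Real.sqrt n = -(C * σ) := by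
      field_simp
      try ring
    rw [h5, h6] at h1
    linarith
  have hterm : ∀ i, (-(h^2) * (x i)⁻¹) * D i ≤ h^2 * C := by
    intro i
    have h0 : -C * x i ≤ D i := by
      rw [hDdef]; exact hHrho x hx zs i
    have hxi := hxpos i
    have e : h^2 * (x i)⁻¹ * (-C * x i) = -(h^2 * C) := by
      field_simp
      try ring
    linarith [mul_le_mul_of_nonneg_left h0 (by positivity : (0:ℝ) ≤ h^2 * (x i)⁻¹), e]
  have hsplit : ∑ i, (p i - zs i) * D i
      = (∑ i, (-(h^2) * (x i)⁻¹) * D i) + h^2 * σ⁻¹ * (∑ i, D i) := by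
    rw [Finset.mul_sum, ← Finset.sum_add_distrib]
    apply Finset.sum_congr rfl
    intro i _
    have hv : p i - zs i = -(h^2) * (x i)⁻¹ + h^2 * σ⁻¹ := by
      have := hval i; linarith
    rw [hv]; ring
  have hsum1 : ∑ i, (-(h^2) * (x i)⁻¹) * D i ≤ (n:ℝ) * (h^2 * C) := by
    calc ∑ i, (-(h^2) * (x i)⁻¹) * D i ≤ ∑ _i : Fin n, h^2 * C :=
          Finset.sum_le_sum fun i _ => hterm i
      _ = (n:ℝ) * (h^2 * C) := by
          simp [Finset.sum_const, Finset.card_univ]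
  have hsum2 : h^2 * σ⁻¹ * (∑ i, D i) ≤ h^2 * C := by
    have e : h^2 * σ⁻¹ * (C * σ) = h^2 * C := by
      field_simp
      try ring
    linarith [mul_le_mul_of_nonneg_left hSle (by positivity : (0:ℝ) ≤ h^2 * σ⁻¹), e]
  have hfinal : fderiv ℝ (H x) zs (p - zs) ≤ h := by
    have hhC : h * (((n:ℝ)+1)*C) ≤ 1 := (le_div_iff₀ (by positivity)).mp hh1
    have hmain : ((n:ℝ)+1) * (h^2*C) ≤ h := by nlinarith
    rw [hlin, hsplit]; linarith
  rw [hdt] at key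
  have hHle : H x p ≤ H x zs + h := by linarith
  linarith

end
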